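/- If p ∈ k[X₁,...,Xₙ] is an ordinary polynomial, then X_{i+1}^{−1} Δᵢ(X_{i+1} p) lies in k[X₁,...,Xₙ]. -/

import Mathlib

/-- The Laurent monomial `X^v` in `k[X₁^{±1},…,Xₙ^{±1}] = k[Fin n →₀ ℤ]`. -/
noncomputable def mono {k : Type*} [CommRing k] {n : ℕ} (v : Fin n →₀ ℤ) :
    AddMonoidAlgebra k (Fin n →₀ ℤ) :=
  AddMonoidAlgebra.single v 1

/-- The `k`-algebra automorphism of the Laurent polynomial ring interchanging
the variables `X_a` and `X_b` (induced by swapping exponents). -/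
noncomputable def swapVars {k : Type*} [CommRing k] {n : ℕ} (a b : Fin n)
    (f : AddMonoidAlgebra k (Fin n →₀ ℤ)) : AddMonoidAlgebra k (Fin n →₀ ℤ) :=
  AddMonoidAlgebra.ofCoeff (Finsupp.mapDomain (Finsupp.equivMapDomain (Equiv.swap a b)) f.coeff)


section Aux
variable {k : Type*} [CommRing k] {n : ℕ}

lemma mono_mul (u v : Fin n →₀ ℤ) :
    (mono u * mono v : AddMonoidAlgebra k (Fin n →₀ ℤ)) = mono (u + v) := by
  simp [mono, AddMonoidAlgebra.single_mul_single]

lemma mono_zero : (mono (0 : Fin n →₀ ℤ) : AddMonoidAlgebra k (Fin n →₀ ℤ)) = 1 := by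
  rw [mono]; exact AddMonoidAlgebra.one_def.symm

lemma reg (a : Fin n) (v : Fin n →₀ ℤ) (hv : 0 < v a)
    (g : AddMonoidAlgebra k (Fin n →₀ ℤ)) (h : mono v * g = g) : g = 0 := by
  by_contra hg
  have hsupp : g.coeff.support.Nonempty :=
    Finsupp.support_nonempty_iff.mpr (by rwa [Ne, AddMonoidAlgebra.coeff_eq_zero])
  obtain ⟨x, hx, hmax⟩ := Finset.exists_max_image g.coeff.support (fun w => w a) hsupp
  have hvx : g.coeff (v + x) = g.coeff x := by
    have h2 := congrArg (fun f => f.coeff (v + x)) h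
    simp only [mono, AddMonoidAlgebra.coeff_single_mul_apply, one_mul, neg_add_cancel_left] at h2
    exact h2.symm
  have hmem : v + x ∈ g.coeff.support := by
    rw [Finsupp.mem_support_iff] at hx ⊢
    rw [hvx]; exact hx
  have := hmax _ hmem
  simp only [Finsupp.add_apply] at this
  omega

lemma tele' {M : Type*} [AddCommGroup M] (F : ℤ → M) (a : ℤ) :
    ∀ N : ℕ, ∑ c ∈ Finset.Icc a (a + N - 1), (F (c + 1) - F c) = F (a + N) - F a := by
  intro N
  induction N with
  | zero =>
    rw [Finset.Icc_eq_empty (by omega), Finset.sum_empty]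
    simp
  | succ N ih =>
    have hins : Finset.Icc a (a + (N + 1 : ℕ) - 1) = insert (a + N) (Finset.Icc a (a + N - 1)) := by
      ext c; simp only [Finset.mem_Icc, Finset.mem_insert]; push_cast; omega
    rw [hins, Finset.sum_insert (by simp [Finset.mem_Icc]), ih]
    push_cast
    rw [show a + ((N : ℤ) + 1) = a + N + 1 by ring]
    abel

lemma tele {M : Type*} [AddCommGroup M] (F : ℤ → M) (a b : ℤ) (hb : a ≤ b + 1) :
    ∑ c ∈ Finset.Icc a b, (F (c + 1) - F c) = F (b + 1) - F a := by
  have h := tele' F a (b + 1 - a).toNat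
  have h1 : a + ((b + 1 - a).toNat : ℤ) = b + 1 := by omega
  rw [h1, show b + 1 - 1 = b by ring] at h
  exact h


section Dem
variable (i' j' : Fin n) (hij : i' ≠ j')

/-- Exponent vector with `i'`-coordinate `w i' + w j' - c` and `j'`-coordinate `c`. -/
noncomputable def adj (w : Fin n →₀ ℤ) (c : ℤ) : Fin n →₀ ℤ :=
  w + Finsupp.single i' (w j' - c) + Finsupp.single j' (c - w j')

include hij

lemma adj_apply_i (w : Fin n →₀ ℤ) (c : ℤ) : adj i' j' w c i' = w i' + w j' - c := by
  simp [adj, Finsupp.single_apply, hij, (Ne.symm hij)]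
  ring

lemma adj_apply_j (w : Fin n →₀ ℤ) (c : ℤ) : adj i' j' w c j' = c := by
  simp [adj, Finsupp.single_apply, hij, (Ne.symm hij)]

omit hij in
lemma adj_apply_ne (w : Fin n →₀ ℤ) (c : ℤ) (t : Fin n) (h1 : t ≠ i') (h2 : t ≠ j') :
    adj i' j' w c t = w t := by
  simp [adj, Finsupp.single_apply, Ne.symm h1, Ne.symm h2]

lemma adj_ext (w w' : Fin n →₀ ℤ) (c c' : ℤ)
    (h1 : w i' + w j' - c = w' i' + w' j' - c') (h2 : c = c')
    (h3 : ∀ t, t ≠ i' → t ≠ j' → w t = w' t) :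
    adj i' j' w c = adj i' j' w' c' := by
  ext t
  by_cases ht1 : t = i'
  · rw [ht1, adj_apply_i i' j' hij, adj_apply_i i' j' hij, h1]
  by_cases ht2 : t = j'
  · rw [ht2, adj_apply_j i' j' hij, adj_apply_j i' j' hij, h2]
  · rw [adj_apply_ne i' j' _ _ _ ht1 ht2, adj_apply_ne i' j' _ _ _ ht1 ht2, h3 t ht1 ht2]

lemma step (w : Fin n →₀ ℤ) (c : ℤ) :
    ((mono (Finsupp.single j' 1) - mono (Finsupp.single i' 1)) *
        mono (adj i' j' w c) : AddMonoidAlgebra k (Fin n →₀ ℤ))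
      = mono (adj i' j' (w + Finsupp.single i' 1) (c + 1))
        - mono (adj i' j' (w + Finsupp.single i' 1) c) := by
  have e1 : Finsupp.single j' 1 + adj i' j' w c
      = adj i' j' (w + Finsupp.single i' 1) (c + 1) := by
    ext t
    by_cases ht1 : t = i'
    · rw [ht1, Finsupp.add_apply, adj_apply_i i' j' hij, adj_apply_i i' j' hij]
      simp [Finsupp.single_apply, hij, Ne.symm hij]
      ring
    by_cases ht2 : t = j'
    · rw [ht2, Finsupp.add_apply, adj_apply_j i' j' hij, adj_apply_j i' j' hij]
      simp [Finsupp.single_apply]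
      ring
    · rw [Finsupp.add_apply, adj_apply_ne i' j' _ _ _ ht1 ht2,
        adj_apply_ne i' j' _ _ _ ht1 ht2]
      simp [Finsupp.single_apply, Ne.symm ht1, Ne.symm ht2]
  have e2 : Finsupp.single i' 1 + adj i' j' w c
      = adj i' j' (w + Finsupp.single i' 1) c := by
    ext t
    by_cases ht1 : t = i'
    · rw [ht1, Finsupp.add_apply, adj_apply_i i' j' hij, adj_apply_i i' j' hij]
      simp [Finsupp.single_apply, hij, Ne.symm hij]
      ring
    by_cases ht2 : t = j'
    · rw [ht2, Finsupp.add_apply, adj_apply_j i' j' hij, adj_apply_j i' j' hij]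
      simp [Finsupp.single_apply, hij, Ne.symm hij]
    · rw [Finsupp.add_apply, adj_apply_ne i' j' _ _ _ ht1 ht2,
        adj_apply_ne i' j' _ _ _ ht1 ht2]
      simp [Finsupp.single_apply, Ne.symm ht1, Ne.symm ht2]
  rw [sub_mul, mono_mul, mono_mul, e1, e2]

lemma adj_add_j (w : Fin n →₀ ℤ) (c : ℤ) :
    Finsupp.single j' 1 + adj i' j' w c = adj i' j' (w + Finsupp.single i' 1) (c + 1) := by
  ext t
  by_cases ht1 : t = i'
  · rw [ht1, Finsupp.add_apply, adj_apply_i i' j' hij, adj_apply_i i' j' hij]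
    simp [Finsupp.single_apply, hij, Ne.symm hij]
    ring
  by_cases ht2 : t = j'
  · rw [ht2, Finsupp.add_apply, adj_apply_j i' j' hij, adj_apply_j i' j' hij]
    simp [Finsupp.single_apply]
    ring
  · rw [Finsupp.add_apply, adj_apply_ne i' j' _ _ _ ht1 ht2,
      adj_apply_ne i' j' _ _ _ ht1 ht2]
    simp [Finsupp.single_apply, Ne.symm ht1, Ne.symm ht2]

lemma adj_add_i (w : Fin n →₀ ℤ) (c : ℤ) :
    Finsupp.single i' 1 + adj i' j' w c = adj i' j' (w + Finsupp.single i' 1) c := by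
  ext t
  by_cases ht1 : t = i'
  · rw [ht1, Finsupp.add_apply, adj_apply_i i' j' hij, adj_apply_i i' j' hij]
    simp [Finsupp.single_apply, hij, Ne.symm hij]
    ring
  by_cases ht2 : t = j'
  · rw [ht2, Finsupp.add_apply, adj_apply_j i' j' hij, adj_apply_j i' j' hij]
    simp [Finsupp.single_apply, hij, Ne.symm hij]
  · rw [Finsupp.add_apply, adj_apply_ne i' j' _ _ _ ht1 ht2,
      adj_apply_ne i' j' _ _ _ ht1 ht2]
    simp [Finsupp.single_apply, Ne.symm ht1, Ne.symm ht2]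

lemma adj_self (w : Fin n →₀ ℤ) : adj i' j' w (w j') = w := by
  ext t
  by_cases ht1 : t = i'
  · rw [ht1, adj_apply_i i' j' hij]; ring
  by_cases ht2 : t = j'
  · rw [ht2, adj_apply_j i' j' hij]
  · rw [adj_apply_ne i' j' _ _ _ ht1 ht2]

lemma swap_eq_adj (w : Fin n →₀ ℤ) :
    Finsupp.equivMapDomain (Equiv.swap i' j') w = adj i' j' w (w i') := by
  ext t
  rw [Finsupp.equivMapDomain_apply]
  by_cases ht1 : t = i'
  · rw [ht1, adj_apply_i i' j' hij]
    rw [Equiv.symm_swap, Equiv.swap_apply_left]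
    ring
  by_cases ht2 : t = j'
  · rw [ht2, adj_apply_j i' j' hij]
    rw [Equiv.symm_swap, Equiv.swap_apply_right]
  · rw [adj_apply_ne i' j' _ _ _ ht1 ht2]
    rw [Equiv.symm_swap, Equiv.swap_apply_of_ne_of_ne ht1 ht2]

omit hij in
lemma step' (w : Fin n →₀ ℤ) (c : ℤ) (hij : i' ≠ j') :
    ((mono (Finsupp.single j' 1) - mono (Finsupp.single i' 1)) *
        mono (adj i' j' w c) : AddMonoidAlgebra k (Fin n →₀ ℤ))
      = mono (adj i' j' (w + Finsupp.single i' 1) (c + 1))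
        - mono (adj i' j' (w + Finsupp.single i' 1) c) := by
  rw [sub_mul, mono_mul, mono_mul, adj_add_j i' j' hij, adj_add_i i' j' hij]

omit hij in
/-- The explicit Demazure image of a monomial. -/
noncomputable def Qm (w : Fin n →₀ ℤ) : AddMonoidAlgebra k (Fin n →₀ ℤ) :=
  if w i' ≤ w j' then ∑ c ∈ Finset.Icc (w i') (w j'), mono (adj i' j' w c)
  else - ∑ c ∈ Finset.Icc (w j' + 1) (w i' - 1), mono (adj i' j' w c)

lemma key_mono (w : Fin n →₀ ℤ) :
    ((mono (Finsupp.single j' 1) - mono (Finsupp.single i' 1)) * Qm i' j' w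
        : AddMonoidAlgebra k (Fin n →₀ ℤ))
      = mono (Finsupp.single j' 1 + w)
        - mono (Finsupp.single i' 1 + Finsupp.equivMapDomain (Equiv.swap i' j') w) := by
  have hend : (mono (Finsupp.single j' 1 + w)
        - mono (Finsupp.single i' 1 + Finsupp.equivMapDomain (Equiv.swap i' j') w)
        : AddMonoidAlgebra k (Fin n →₀ ℤ))
      = mono (adj i' j' (w + Finsupp.single i' 1) (w j' + 1))
        - mono (adj i' j' (w + Finsupp.single i' 1) (w i')) := by
    rw [swap_eq_adj i' j' hij]
    rw [← adj_add_j i' j' hij, ← adj_add_i i' j' hij, adj_self i' j' hij]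
  rw [hend]
  unfold Qm
  split_ifs with hab
  · rw [Finset.mul_sum]
    rw [Finset.sum_congr rfl (fun c _ => step' i' j' w c hij)]
    exact tele (fun c => mono (adj i' j' (w + Finsupp.single i' 1) c)) (w i') (w j')
      (by omega)
  · rw [mul_neg, Finset.mul_sum]
    rw [Finset.sum_congr rfl (fun c _ => step' i' j' w c hij)]
    rw [tele (fun c => mono (adj i' j' (w + Finsupp.single i' 1) c)) (w j' + 1) (w i' - 1)
      (by omega)]
    rw [show w i' - 1 + 1 = w i' by ring, neg_sub]

omit hij in
/-- Explicit Demazure image of a general element, extended linearly. -/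
noncomputable def Qp (p : AddMonoidAlgebra k (Fin n →₀ ℤ)) :
    AddMonoidAlgebra k (Fin n →₀ ℤ) :=
  ∑ w ∈ p.coeff.support, p.coeff w • Qm i' j' w

lemma key (p : AddMonoidAlgebra k (Fin n →₀ ℤ)) :
    (mono (Finsupp.single j' 1) - mono (Finsupp.single i' 1) :
        AddMonoidAlgebra k (Fin n →₀ ℤ)) * Qp i' j' p
      = mono (Finsupp.single j' 1) * p
        - mono (Finsupp.single i' 1) * swapVars i' j' p := by
  have hp : p = ∑ w ∈ p.coeff.support, AddMonoidAlgebra.single w (p.coeff w) :=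
    (AddMonoidAlgebra.sum_coeff_single p).symm
  have hσ : swapVars i' j' p
      = ∑ w ∈ p.coeff.support,
          AddMonoidAlgebra.single (Finsupp.equivMapDomain (Equiv.swap i' j') w) (p.coeff w) := by
    rw [swapVars, Finsupp.mapDomain, AddMonoidAlgebra.ofCoeff_finsuppSum]; rfl
  unfold Qp
  rw [Finset.mul_sum]
  rw [Finset.sum_congr rfl
    (fun w _ => by rw [mul_smul_comm, key_mono i' j' hij w, smul_sub])]
  rw [Finset.sum_sub_distrib]
  congr 1
  · conv_rhs => rw [hp]
    rw [Finset.mul_sum]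
    exact Finset.sum_congr rfl fun w _ => by
      rw [mono, mono, AddMonoidAlgebra.single_mul_single, one_mul,
        AddMonoidAlgebra.smul_single', mul_one]
  · rw [hσ, Finset.mul_sum]
    exact Finset.sum_congr rfl fun w _ => by
      rw [mono, mono, AddMonoidAlgebra.single_mul_single, one_mul,
        AddMonoidAlgebra.smul_single', mul_one]

lemma Qm_support (w : Fin n →₀ ℤ) (hw : ∀ t, 0 ≤ w t) :
    ∀ v ∈ (Qm i' j' w : AddMonoidAlgebra k (Fin n →₀ ℤ)).coeff.support, ∀ t, 0 ≤ v t := by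
  intro v hv t
  have main : ∀ lo hi2 : ℤ, 0 ≤ lo → 0 ≤ w i' + w j' - hi2 →
      v ∈ (∑ c ∈ Finset.Icc lo hi2, mono (adj i' j' w c)
          : AddMonoidAlgebra k (Fin n →₀ ℤ)).coeff.support →
      0 ≤ v t := by
    intro lo hi2 hlo hhi hv
    rw [AddMonoidAlgebra.coeff_sum] at hv
    obtain ⟨c, hc, hc2⟩ := Finset.mem_biUnion.mp (Finsupp.support_finset_sum hv)
    have hveq : v = adj i' j' w c :=
      Finset.mem_singleton.mp (Finsupp.support_single_subset hc2)
    subst hveq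
    rw [Finset.mem_Icc] at hc
    by_cases ht1 : t = i'
    · rw [ht1, adj_apply_i i' j' hij]; omega
    by_cases ht2 : t = j'
    · rw [ht2, adj_apply_j i' j' hij]; omega
    · rw [adj_apply_ne i' j' _ _ _ ht1 ht2]; exact hw t
  unfold Qm at hv
  split_ifs at hv with hab
  · exact main (w i') (w j') (hw i') (by have := hw i'; omega) hv
  · rw [AddMonoidAlgebra.coeff_neg, Finsupp.support_neg] at hv
    exact main (w j' + 1) (w i' - 1) (by have := hw j'; omega)
      (by have := hw j'; omega) hv

end Dem


end Aux

/-- If `p ∈ k[X₁,…,Xₙ]` is an ordinary polynomial, then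
`X_{i+1}^{-1} Δᵢ(X_{i+1} p)` is again an ordinary polynomial. -/
theorem stmt11 {k : Type*} [CommRing k] {n : ℕ} (i : ℕ) (hi : i + 1 < n)
    (D : AddMonoidAlgebra k (Fin n →₀ ℤ) → AddMonoidAlgebra k (Fin n →₀ ℤ))
    (hD : ∀ f,
      (1 - mono (Finsupp.single (⟨i, Nat.lt_of_succ_lt hi⟩ : Fin n) 1
          + Finsupp.single (⟨i + 1, hi⟩ : Fin n) (-1))) * D f
        = f - swapVars ⟨i, Nat.lt_of_succ_lt hi⟩ ⟨i + 1, hi⟩ f) :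
    ∀ p : AddMonoidAlgebra k (Fin n →₀ ℤ),
      (∀ v ∈ p.coeff.support, ∀ t, 0 ≤ v t) →
      ∀ v ∈ (mono (Finsupp.single (⟨i + 1, hi⟩ : Fin n) (-1))
          * D (mono (Finsupp.single (⟨i + 1, hi⟩ : Fin n) 1) * p)).coeff.support,
        ∀ t, 0 ≤ v t := by
  intro p hp v hv t
  have hij : (⟨i, Nat.lt_of_succ_lt hi⟩ : Fin n) ≠ ⟨i + 1, hi⟩ := by
    simp [Fin.ext_iff]
  set i' : Fin n := ⟨i, Nat.lt_of_succ_lt hi⟩ with hi'def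
  set j' : Fin n := ⟨i + 1, hi⟩ with hj'def
  set q : AddMonoidAlgebra k (Fin n →₀ ℤ) :=
    mono (Finsupp.single j' (-1)) * D (mono (Finsupp.single j' 1) * p) with hqdef
  have hswap : swapVars i' j' (mono (Finsupp.single j' 1) * p)
      = mono (Finsupp.single i' 1) * swapVars i' j' p := by
    have hcoe : (⇑(Finsupp.domCongr (M := ℤ) (Equiv.swap i' j')))
        = Finsupp.equivMapDomain (Equiv.swap i' j') := rfl
    have hmul := AddMonoidAlgebra.mapDomain_mul (R := k)
      (Finsupp.domCongr (M := ℤ) (Equiv.swap i' j')) (mono (Finsupp.single j' 1)) p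
    rw [hcoe] at hmul
    rw [swapVars]
    refine Eq.trans hmul ?_
    congr 1
    rw [mono, AddMonoidAlgebra.mapDomain_single, Finsupp.equivMapDomain_single,
      Equiv.swap_apply_right]
    rfl
  have h0j : Finsupp.single j' (1 : ℤ) + Finsupp.single j' (-1) = 0 := by
    rw [← Finsupp.single_add]; norm_num
  have honemul : (mono (Finsupp.single j' 1) - mono (Finsupp.single i' 1)
        : AddMonoidAlgebra k (Fin n →₀ ℤ)) * mono (Finsupp.single j' (-1))
      = 1 - mono (Finsupp.single i' 1 + Finsupp.single j' (-1)) := by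
    rw [sub_mul, mono_mul, mono_mul, h0j, mono_zero]
  have hq : (mono (Finsupp.single j' 1) - mono (Finsupp.single i' 1)
        : AddMonoidAlgebra k (Fin n →₀ ℤ)) * q
      = mono (Finsupp.single j' 1) * p
        - mono (Finsupp.single i' 1) * swapVars i' j' p := by
    rw [hqdef, ← mul_assoc, honemul, hD (mono (Finsupp.single j' 1) * p), hswap]
  have hsub : (mono (Finsupp.single j' 1) - mono (Finsupp.single i' 1)
        : AddMonoidAlgebra k (Fin n →₀ ℤ)) * (q - Qp i' j' p) = 0 := by
    rw [mul_sub, hq, key i' j' hij p, sub_self]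
  have h2 : mono (Finsupp.single j' 1) * (q - Qp i' j' p)
      = mono (Finsupp.single i' 1) * (q - Qp i' j' p) := by
    rw [sub_mul] at hsub
    exact sub_eq_zero.mp hsub
  have hfix : mono (Finsupp.single i' (-1) + Finsupp.single j' 1) * (q - Qp i' j' p)
      = q - Qp i' j' p := by
    have h3 := congrArg (fun x => (mono (Finsupp.single i' (-1))
        : AddMonoidAlgebra k (Fin n →₀ ℤ)) * x) h2
    rw [← mul_assoc, ← mul_assoc, mono_mul, mono_mul] at h3
    have h4 : Finsupp.single i' (-1 : ℤ) + Finsupp.single i' 1 = 0 := by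
      rw [← Finsupp.single_add]; norm_num
    rw [h4, mono_zero, one_mul] at h3
    exact h3
  have hd : q - Qp i' j' p = 0 := by
    refine reg j' (Finsupp.single i' (-1) + Finsupp.single j' 1) ?_ _ hfix
    rw [Finsupp.add_apply, Finsupp.single_apply, Finsupp.single_apply]
    simp [hij]
  have hqQ : q = Qp i' j' p := by rwa [sub_eq_zero] at hd
  rw [hqQ] at hv
  unfold Qp at hv
  rw [AddMonoidAlgebra.coeff_sum] at hv
  obtain ⟨w, hw, hw2⟩ := Finset.mem_biUnion.mp (Finsupp.support_finset_sum hv)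
  rw [AddMonoidAlgebra.coeff_smul] at hw2
  exact Qm_support i' j' hij w (fun t' => hp w hw t') v (Finsupp.support_smul hw2) t
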